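/- Let q and a be real with 0 < q < 1 and 0 < a < 1. Then 4·∑_{n=0}^{∞} a^{2n+1}/((2n+1)(1 − q^{2n+1})) = log( ((−a;q)_∞/(a;q)_∞)² ). -/

import Mathlib

/-- The q-Pochhammer infinite product `(a; q)_∞ = ∏_{n=0}^∞ (1 - a qⁿ)`. -/
noncomputable def qPoch (a q : ℝ) : ℝ := ∏' n : ℕ, (1 - a * q ^ n)

open Real

/-- Proposition 7: `4 ∑_{n=0}^∞ a^{2n+1}/((2n+1)(1-q^{2n+1})) = log(((-a;q)_∞/(a;q)_∞)²)`. -/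
theorem stmt_8 (q a : ℝ) (hq0 : 0 < q) (hq1 : q < 1) (ha0 : 0 < a) (ha1 : a < 1) :
    4 * ∑' n : ℕ, a ^ (2 * n + 1) / ((2 * n + 1 : ℝ) * (1 - q ^ (2 * n + 1))) =
      Real.log ((qPoch (-a) q / qPoch a q) ^ 2) := by
  -- basic facts about x n := a * q ^ n
  have hxpos : ∀ n : ℕ, 0 < a * q ^ n := fun n => mul_pos ha0 (pow_pos hq0 n)
  have hxle : ∀ n : ℕ, a * q ^ n ≤ a := fun n => by
    nlinarith [pow_le_one₀ hq0.le hq1.le (n := n), pow_pos hq0 n]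
  have hxlt : ∀ n : ℕ, a * q ^ n < 1 := fun n => lt_of_le_of_lt (hxle n) ha1
  have habs : ∀ n : ℕ, |a * q ^ n| < 1 := fun n => by
    rw [abs_of_pos (hxpos n)]; exact hxlt n
  have h1p : ∀ n : ℕ, (0:ℝ) < 1 + a * q ^ n := fun n => by nlinarith [hxpos n]
  have h1m : ∀ n : ℕ, (0:ℝ) < 1 - a * q ^ n := fun n => by nlinarith [hxlt n]
  -- inner series (in k) for each n
  have hA : ∀ n : ℕ, HasSum (fun k : ℕ => (2:ℝ) * (1 / (2 * k + 1)) * (a * q ^ n) ^ (2 * k + 1))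
      (Real.log (1 + a * q ^ n) - Real.log (1 - a * q ^ n)) :=
    fun n => Real.hasSum_log_sub_log_of_abs_lt_one (habs n)
  -- series in n for each k
  have hq2k : ∀ k : ℕ, q ^ (2 * k + 1) < 1 := fun k => pow_lt_one₀ hq0.le hq1 (by omega)
  have hq2k0 : ∀ k : ℕ, (0:ℝ) < 1 - q ^ (2 * k + 1) := fun k => by
    have := hq2k k; linarith
  have hB : ∀ k : ℕ, HasSum (fun n : ℕ => (2:ℝ) * (1 / (2 * k + 1)) * (a * q ^ n) ^ (2 * k + 1))
      ((2:ℝ) * (1 / (2 * k + 1)) * a ^ (2 * k + 1) * (1 - q ^ (2 * k + 1))⁻¹) := by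
    intro k
    have hg := (hasSum_geometric_of_lt_one (pow_nonneg hq0.le _) (hq2k k)).mul_left
      ((2:ℝ) * (1 / (2 * k + 1)) * a ^ (2 * k + 1))
    refine hg.congr_fun fun n => ?_
    rw [mul_pow, ← pow_mul, ← pow_mul, mul_comm (2*k+1) n]
    ring
  -- summability of the k-sums
  have hSsum : Summable (fun k : ℕ =>
      (2:ℝ) * (1 / (2 * k + 1)) * a ^ (2 * k + 1) * (1 - q ^ (2 * k + 1))⁻¹) := by
    refine Summable.of_nonneg_of_le (fun k => ?_) (fun k => ?_)
      (((summable_geometric_of_lt_one (sq_nonneg a) (by nlinarith : a ^ 2 < 1)).mul_left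
        (2 * a * (1 - q)⁻¹)) : Summable fun k : ℕ => 2 * a * (1 - q)⁻¹ * (a ^ 2) ^ k)
    · have := hq2k0 k
      positivity
    · have hk0 : (0:ℝ) ≤ (k:ℝ) := Nat.cast_nonneg k
      have h1 : (1:ℝ) / (2 * k + 1) ≤ 1 := by
        rw [div_le_one (by positivity)]; linarith
      have h2 : q ^ (2 * k + 1) ≤ q := by
        calc q ^ (2 * k + 1) ≤ q ^ 1 := pow_le_pow_of_le_one hq0.le hq1.le (by omega)
        _ = q := pow_one q
      have h3 : (1 - q ^ (2 * k + 1))⁻¹ ≤ (1 - q)⁻¹ := by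
        apply inv_anti₀ (by linarith) (by linarith)
      have h4 : a ^ (2 * k + 1) = a * (a ^ 2) ^ k := by
        rw [← pow_mul]; ring
      calc (2:ℝ) * (1 / (2 * k + 1)) * a ^ (2 * k + 1) * (1 - q ^ (2 * k + 1))⁻¹
          ≤ 2 * 1 * a ^ (2 * k + 1) * (1 - q)⁻¹ := by
            gcongr
            exact inv_nonneg.mpr (hq2k0 k).le
        _ = 2 * a * (1 - q)⁻¹ * (a ^ 2) ^ k := by rw [h4]; ring
  -- double sum swap
  set f : ℕ × ℕ → ℝ := fun p => (2:ℝ) * (1 / (2 * p.1 + 1)) * (a * q ^ p.2) ^ (2 * p.1 + 1)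
    with hf
  have hfnonneg : 0 ≤ f := fun p => by
    have := hxpos p.2; positivity
  have hfsummable : Summable f := by
    rw [← Function.uncurry_curry f] at *
    refine (summable_prod_of_nonneg hfnonneg).2 ⟨fun k => (hB k).summable, ?_⟩
    refine hSsum.congr fun k => ?_
    exact ((hB k).tsum_eq).symm
  have hswap : (∑' (k : ℕ) (n : ℕ), f (k, n)) = ∑' (n : ℕ) (k : ℕ), f (k, n) := by
    exact (Summable.tsum_comm (f := fun k n => f (k, n)) hfsummable).symm
  -- evaluate both iterated sums
  have hleft : (∑' (k : ℕ) (n : ℕ), f (k, n)) =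
      ∑' k : ℕ, (2:ℝ) * (1 / (2 * k + 1)) * a ^ (2 * k + 1) * (1 - q ^ (2 * k + 1))⁻¹ :=
    tsum_congr fun k => (hB k).tsum_eq
  have hright : (∑' (n : ℕ) (k : ℕ), f (k, n)) =
      ∑' n : ℕ, (Real.log (1 + a * q ^ n) - Real.log (1 - a * q ^ n)) :=
    tsum_congr fun n => (hA n).tsum_eq
  -- summability of the log series
  have hlog1 : Summable fun n : ℕ => Real.log (1 + a * q ^ n) := by
    refine Summable.of_nonneg_of_le (fun n => Real.log_nonneg (by nlinarith [hxpos n]))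
      (fun n => ?_) ((summable_geometric_of_lt_one hq0.le hq1).mul_left a)
    have := Real.log_le_sub_one_of_pos (h1p n)
    linarith
  have hlog2 : Summable fun n : ℕ => Real.log (1 - a * q ^ n) := by
    rw [← summable_neg_iff]
    refine Summable.of_nonneg_of_le (fun n => ?_) (fun n => ?_)
      ((summable_geometric_of_lt_one hq0.le hq1).mul_left (a * (1 - a)⁻¹))
    · simp only [neg_nonneg]
      exact Real.log_nonpos (by linarith [h1m n]) (by nlinarith [hxpos n])
    · have h := Real.log_le_sub_one_of_pos (inv_pos.mpr (h1m n))
      rw [← Real.log_inv]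
      have hinv : (1 - a * q ^ n)⁻¹ - 1 = (a * q ^ n) / (1 - a * q ^ n) := by
        field_simp [(h1m n).ne']
        ring
      have hd : (a * q ^ n) / (1 - a * q ^ n) ≤ (a * q ^ n) / (1 - a) := by
        gcongr
        · linarith [hxle n]
      rw [hinv] at h
      calc Real.log (1 - a * q ^ n)⁻¹ ≤ (a * q ^ n) / (1 - a * q ^ n) := h
        _ ≤ (a * q ^ n) / (1 - a) := hd
        _ = a * (1 - a)⁻¹ * q ^ n := by ring
  -- log of the products
  have hprod1 : Real.exp (∑' n : ℕ, Real.log (1 + a * q ^ n)) = ∏' n : ℕ, (1 + a * q ^ n) := by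
    exact Real.rexp_tsum_eq_tprod (fun n => h1p n) hlog1
  have hprod2 : Real.exp (∑' n : ℕ, Real.log (1 - a * q ^ n)) = ∏' n : ℕ, (1 - a * q ^ n) := by
    exact Real.rexp_tsum_eq_tprod (fun n => h1m n) hlog2
  have hq1eq : qPoch (-a) q = ∏' n : ℕ, (1 + a * q ^ n) := by
    unfold qPoch
    exact tprod_congr fun n => by ring
  have hq2eq : qPoch a q = ∏' n : ℕ, (1 - a * q ^ n) := rfl
  have hlogP1 : Real.log (qPoch (-a) q) = ∑' n : ℕ, Real.log (1 + a * q ^ n) := by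
    rw [hq1eq, ← hprod1, Real.log_exp]
  have hlogP2 : Real.log (qPoch a q) = ∑' n : ℕ, Real.log (1 - a * q ^ n) := by
    rw [hq2eq, ← hprod2, Real.log_exp]
  have hP1pos : 0 < qPoch (-a) q := by rw [hq1eq, ← hprod1]; exact Real.exp_pos _
  have hP2pos : 0 < qPoch a q := by rw [hq2eq, ← hprod2]; exact Real.exp_pos _
  -- assemble
  rw [Real.log_pow, Real.log_div hP1pos.ne' hP2pos.ne', hlogP1, hlogP2,
    ← Summable.tsum_sub hlog1 hlog2, ← hright, ← hswap, hleft]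
  norm_num
  rw [← tsum_mul_left (a := (2:ℝ)), ← tsum_mul_left (a := (4:ℝ))]
  refine tsum_congr fun k => ?_
  have h1 : (2 * (k:ℝ) + 1) ≠ 0 := by positivity
  have h2 : (1 - q ^ (2 * k + 1)) ≠ 0 := (hq2k0 k).ne'
  field_simp
  ring
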